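/- Let K be a compact Hausdorff space, μ₀ a regular Borel signed measure on K with total variation norm 1, and f₀ ∈ C(K) with ‖f₀‖ = 1 such that ∫_K f₀ dμ₀ > 1 − α for some α > 0. Let K⁺, K⁻ be a Hahn decomposition of K for μ₀, and for 0 < x < 1 set D_x = (K⁺ ∩ {f₀ > x}) ∪ (K⁻ ∩ {f₀ < −x}). Then |μ₀|(D_x) > 1 − α/(1 − x). -/

import Mathlib

open MeasureTheory

/-- Integral of a function against a signed measure. -/
noncomputable def svint {K : Type*} [MeasurableSpace K]
    (ν : MeasureTheory.SignedMeasure K) (f : K → ℝ) : ℝ :=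
  (∫ t, f t ∂ν.toJordanDecomposition.posPart) -
    ∫ t, f t ∂ν.toJordanDecomposition.negPart

/-- The Hahn-decomposition estimate `|μ₀|(D_x) > 1 - α/(1-x)`. -/
theorem stmt5 (K : Type*) [TopologicalSpace K] [CompactSpace K] [T2Space K]
    [MeasurableSpace K] [BorelSpace K]
    (μ₀ : MeasureTheory.SignedMeasure K)
    (hnorm : μ₀.totalVariation Set.univ = 1)
    (f₀ : C(K, ℝ)) (hf₀ : ‖f₀‖ = 1)
    (α : ℝ) (hα : 0 < α) (hint : 1 - α < svint μ₀ ⇑f₀)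
    (P N : Set K) (hPm : MeasurableSet P) (hNm : MeasurableSet N)
    (hPN : P ∪ N = Set.univ) (hdisj : P ∩ N = ∅)
    (hP : ∀ A ⊆ P, MeasurableSet A → 0 ≤ μ₀ A)
    (hN : ∀ A ⊆ N, MeasurableSet A → μ₀ A ≤ 0)
    (x : ℝ) (hx : 0 < x) (hx1 : x < 1) :
    1 - α / (1 - x) <
      (μ₀.totalVariation
        ((P ∩ {t | x < f₀ t}) ∪ (N ∩ {t | f₀ t < -x}))).toReal := by
  classical
  set μp := μ₀.toJordanDecomposition.posPart with hμp
  set μn := μ₀.toJordanDecomposition.negPart with hμn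
  have hfin_p : IsFiniteMeasure μp := inferInstance
  have hfin_n : IsFiniteMeasure μn := inferInstance
  set A : Set K := {t | x < f₀ t} with hA
  set B : Set K := {t | f₀ t < -x} with hB
  have hAm : MeasurableSet A := measurableSet_lt measurable_const (map_continuous f₀).measurable
  have hBm : MeasurableSet B := measurableSet_lt (map_continuous f₀).measurable measurable_const
  -- μp N = 0 and μn P = 0
  obtain ⟨i, hi₁, hi₂, hi₃, hpos, hneg⟩ := μ₀.toJordanDecomposition_spec
  have hμpN : μp N = 0 := by
    rw [hμp, hpos, SignedMeasure.toMeasureOfZeroLE_apply _ hi₂ hi₁ hNm]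
    have h1 : μ₀ (i ∩ N) ≤ 0 := hN _ Set.inter_subset_right (hi₁.inter hNm)
    have h2 : 0 ≤ μ₀ (i ∩ N) := by
      have := (VectorMeasure.restrict_le_restrict_iff _ _ hi₁).mp hi₂
        (hi₁.inter hNm) Set.inter_subset_left
      simpa using this
    have : μ₀ (i ∩ N) = 0 := le_antisymm h1 h2
    simp [this]
  have hμnP : μn P = 0 := by
    rw [hμn, hneg, SignedMeasure.toMeasureOfLEZero_apply _ hi₃ hi₁.compl hPm]
    have h1 : 0 ≤ μ₀ (iᶜ ∩ P) := hP _ Set.inter_subset_right (hi₁.compl.inter hPm)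
    have h2 : μ₀ (iᶜ ∩ P) ≤ 0 := by
      have := (VectorMeasure.restrict_le_restrict_iff _ _ hi₁.compl).mp hi₃
        (hi₁.compl.inter hPm) Set.inter_subset_left
      simpa using this
    have : μ₀ (iᶜ ∩ P) = 0 := le_antisymm h2 h1
    simp [this]
  -- bound on f₀
  have hbd : ∀ t, |f₀ t| ≤ 1 := by
    intro t
    have := f₀.norm_coe_le_norm t
    rwa [hf₀, Real.norm_eq_abs] at this
  -- integrability
  have hint_p : Integrable (⇑f₀) μp :=
    integrableOn_univ.mp ((map_continuous f₀).continuousOn.integrableOn_compact isCompact_univ)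
  have hint_n : Integrable (⇑f₀) μn :=
    integrableOn_univ.mp ((map_continuous f₀).continuousOn.integrableOn_compact isCompact_univ)
  -- complements
  have hPcN : Pᶜ ⊆ N := by
    intro t ht
    rcases (Set.eq_univ_iff_forall.mp hPN t) with h | h
    · exact absurd h ht
    · exact h
  have hNcP : Nᶜ ⊆ P := by
    intro t ht
    rcases (Set.eq_univ_iff_forall.mp hPN t) with h | h
    · exact h
    · exact absurd h ht
  have hμpPc : μp Pᶜ = 0 := measure_mono_null hPcN hμpN
  have hμnNc : μn Nᶜ = 0 := measure_mono_null hNcP hμnP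
  -- real quantities
  set a := (μp (P ∩ A)).toReal with ha
  set a' := (μp (P \ A)).toReal with ha'
  set b := (μn (N ∩ B)).toReal with hb
  set b' := (μn (N \ B)).toReal with hb'
  have hanneg : 0 ≤ a := ENNReal.toReal_nonneg
  have hbnneg : 0 ≤ b := ENNReal.toReal_nonneg
  have ha'nneg : 0 ≤ a' := ENNReal.toReal_nonneg
  have hb'nneg : 0 ≤ b' := ENNReal.toReal_nonneg
  -- total mass = 1
  have hmass : a + a' + (b + b') = 1 := by
    have hP1 : μp (P ∩ A) + μp (P \ A) = μp Set.univ := by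
      rw [measure_inter_add_diff P hAm]
      have : μp Set.univ = μp P + μp Pᶜ := (measure_add_measure_compl hPm).symm
      rw [this, hμpPc, add_zero]
    have hN1 : μn (N ∩ B) + μn (N \ B) = μn Set.univ := by
      rw [measure_inter_add_diff N hBm]
      have : μn Set.univ = μn N + μn Nᶜ := (measure_add_measure_compl hNm).symm
      rw [this, hμnNc, add_zero]
    have htot : μp Set.univ + μn Set.univ = 1 := by
      have : μ₀.totalVariation Set.univ = μp Set.univ + μn Set.univ := rfl
      rw [this] at hnorm; exact hnorm
    have h1 : a + a' = (μp Set.univ).toReal := by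
      rw [ha, ha', ← ENNReal.toReal_add (measure_ne_top _ _) (measure_ne_top _ _), hP1]
    have h2 : b + b' = (μn Set.univ).toReal := by
      rw [hb, hb', ← ENNReal.toReal_add (measure_ne_top _ _) (measure_ne_top _ _), hN1]
    rw [h1, h2, ← ENNReal.toReal_add (measure_ne_top _ _) (measure_ne_top _ _), htot]
    simp
  -- total variation of D equals a + b
  have hTV : (μ₀.totalVariation ((P ∩ A) ∪ (N ∩ B))).toReal = a + b := by
    have h1 : μp ((P ∩ A) ∪ (N ∩ B)) = μp (P ∩ A) := by
      refine le_antisymm ?_ (measure_mono Set.subset_union_left)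
      calc μp ((P ∩ A) ∪ (N ∩ B)) ≤ μp (P ∩ A) + μp (N ∩ B) := measure_union_le _ _
        _ = μp (P ∩ A) := by
            rw [measure_mono_null Set.inter_subset_left hμpN, add_zero]
    have h2 : μn ((P ∩ A) ∪ (N ∩ B)) = μn (N ∩ B) := by
      refine le_antisymm ?_ (measure_mono Set.subset_union_right)
      calc μn ((P ∩ A) ∪ (N ∩ B)) ≤ μn (P ∩ A) + μn (N ∩ B) := measure_union_le _ _
        _ = μn (N ∩ B) := by
            rw [measure_mono_null Set.inter_subset_left hμnP, zero_add]
    have : μ₀.totalVariation ((P ∩ A) ∪ (N ∩ B))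
        = μp ((P ∩ A) ∪ (N ∩ B)) + μn ((P ∩ A) ∪ (N ∩ B)) := rfl
    rw [this, h1, h2, ENNReal.toReal_add (measure_ne_top _ _) (measure_ne_top _ _)]
  -- bound the integral
  have hsv : svint μ₀ ⇑f₀ ≤ (a + x * a') + (b + x * b') := by
    have hIp : ∫ t, f₀ t ∂μp ≤ a + x * a' := by
      have hz : ∫ t in Pᶜ, f₀ t ∂μp = 0 := by
        rw [Measure.restrict_eq_zero.mpr hμpPc]; exact integral_zero_measure _
      have hsplit : ∫ t, f₀ t ∂μp = (∫ t in P, f₀ t ∂μp) := by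
        rw [← integral_add_compl hPm hint_p, hz, add_zero]
      have hsplit2 : (∫ t in P, f₀ t ∂μp)
          = (∫ t in P ∩ A, f₀ t ∂μp) + ∫ t in P \ A, f₀ t ∂μp :=
        (integral_inter_add_diff hAm hint_p.integrableOn).symm
      have h1 : (∫ t in P ∩ A, f₀ t ∂μp) ≤ a := by
        have := setIntegral_mono_on hint_p.integrableOn (integrableOn_const (measure_ne_top _ _) enorm_ne_top)
          (hPm.inter hAm) (fun t _ => (abs_le.mp (hbd t)).2)
        simpa [setIntegral_const, Measure.real] using this
      have h2 : (∫ t in P \ A, f₀ t ∂μp) ≤ x * a' := by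
        have hle : ∀ t ∈ P \ A, f₀ t ≤ x := fun t ht => le_of_not_gt ht.2
        have := setIntegral_mono_on hint_p.integrableOn (integrableOn_const (measure_ne_top _ _) enorm_ne_top)
          (hPm.diff hAm) hle
        simpa [setIntegral_const, mul_comm, Measure.real] using this
      rw [hsplit, hsplit2]; exact add_le_add h1 h2
    have hIn : -∫ t, f₀ t ∂μn ≤ b + x * b' := by
      have hz : ∫ t in Nᶜ, f₀ t ∂μn = 0 := by
        rw [Measure.restrict_eq_zero.mpr hμnNc]; exact integral_zero_measure _
      have hsplit : ∫ t, f₀ t ∂μn = (∫ t in N, f₀ t ∂μn) := by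
        rw [← integral_add_compl hNm hint_n, hz, add_zero]
      have hsplit2 : (∫ t in N, f₀ t ∂μn)
          = (∫ t in N ∩ B, f₀ t ∂μn) + ∫ t in N \ B, f₀ t ∂μn :=
        (integral_inter_add_diff hBm hint_n.integrableOn).symm
      have h1 : -b ≤ (∫ t in N ∩ B, f₀ t ∂μn) := by
        have hle : ∀ t ∈ N ∩ B, (-1 : ℝ) ≤ f₀ t := fun t _ => (abs_le.mp (hbd t)).1
        have := setIntegral_mono_on (integrableOn_const (measure_ne_top _ _) enorm_ne_top)
          hint_n.integrableOn (hNm.inter hBm) hle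
        simpa [setIntegral_const, Measure.real] using this
      have h2 : -(x * b') ≤ (∫ t in N \ B, f₀ t ∂μn) := by
        have hle : ∀ t ∈ N \ B, -x ≤ f₀ t := by
          intro t ht
          have : ¬ f₀ t < -x := ht.2
          linarith [le_of_not_gt this]
        have := setIntegral_mono_on (integrableOn_const (measure_ne_top _ _) enorm_ne_top)
          hint_n.integrableOn (hNm.diff hBm) hle
        simpa [setIntegral_const, mul_comm, Measure.real] using this
      rw [hsplit, hsplit2]; linarith
    have : svint μ₀ ⇑f₀ = (∫ t, f₀ t ∂μp) + (-∫ t, f₀ t ∂μn) := by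
      rw [svint]; ring
    rw [this]; exact add_le_add hIp hIn
  -- conclude
  rw [hTV]
  have hkey : 1 - α < (a + b) + x * (a' + b') := by
    calc 1 - α < svint μ₀ ⇑f₀ := hint
    _ ≤ (a + x * a') + (b + x * b') := hsv
    _ = (a + b) + x * (a' + b') := by ring
  have h1x : 0 < 1 - x := by linarith
  have h2 : 1 - (a + b) < α / (1 - x) := by
    rw [lt_div_iff₀ h1x]; nlinarith [hkey, hmass]
  linarith
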